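/- (Connection coefficient formula, equivalent to $q$-Saalschütz.) For $0<q<1$, nonzero complex numbers $a, b, \sigma$, and a nonnegative integer $m$: $(b\sigma; q)_m (b/\sigma; q)_m = (ab; q)_m (b/a; q)_m \sum_{k=0}^m \frac{(q^{-m};q)_k \, q^k}{(q;q)_k (ab;q)_k (q^{1-m}a/b;q)_k} (a\sigma;q)_k (a/\sigma;q)_k$, provided $(ab;q)_k \neq 0$ and $(q^{1-m}a/b;q)_k \neq 0$ for $0 \leq k \leq m$. -/

import Mathlib

/-- Finite q-shifted factorial `(c;q)_j`. -/
noncomputable def qP (q : ℝ) (c : ℂ) (j : ℕ) : ℂ :=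
  ∏ i ∈ Finset.range j, (1 - c * (q : ℂ) ^ i)

lemma qP_zero (q : ℝ) (c : ℂ) : qP q c 0 = 1 := by simp [qP]

lemma qP_succ (q : ℝ) (c : ℂ) (j : ℕ) :
    qP q c (j + 1) = qP q c j * (1 - c * (q : ℂ) ^ j) :=
  Finset.prod_range_succ _ _

lemma qP_shift (q : ℝ) {c c' : ℂ} (h : c' = c * q) (j : ℕ) :
    qP q c (j + 1) = (1 - c) * qP q c' j := by
  rw [qP, Finset.prod_range_succ', pow_zero, mul_one, mul_comm]
  congr 1
  refine Finset.prod_congr rfl fun i _ => ?_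
  rw [h, pow_succ]; ring

lemma qP_factor_ne (q : ℝ) {c : ℂ} {n : ℕ} (h : qP q c n ≠ 0) {i : ℕ} (hi : i < n) :
    1 - c * (q : ℂ) ^ i ≠ 0 := fun h0 =>
  h (Finset.prod_eq_zero (Finset.mem_range.mpr hi) h0)

lemma qP_q_ne_zero {q : ℝ} (hq0 : 0 < q) (hq1 : q < 1) (k : ℕ) : qP q (q : ℂ) k ≠ 0 := by
  rw [qP]
  refine Finset.prod_ne_zero_iff.mpr fun i _ => ?_
  have : ((q : ℂ)) * (q : ℂ) ^ i = ((q ^ (i + 1) : ℝ) : ℂ) := by push_cast; ring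
  rw [this, ← Complex.ofReal_one, ← Complex.ofReal_sub]
  have h : q ^ (i + 1) < 1 := pow_lt_one₀ hq0.le hq1 (Nat.succ_ne_zero i)
  exact Complex.ofReal_ne_zero.mpr (by linarith)

/-- The connection coefficient including the prefactor. -/
noncomputable def dco (q : ℝ) (a b : ℂ) (M k : ℕ) : ℂ :=
  qP q (a * b) M * qP q (b / a) M *
    ((qP q (((q : ℂ) ^ M)⁻¹) k * (q : ℂ) ^ k) /
      (qP q (q : ℂ) k * qP q (a * b) k * qP q (((q : ℂ) ^ M)⁻¹ * (q : ℂ) * a / b) k))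

lemma sigma_step (q : ℝ) (hq : (q : ℂ) ≠ 0) (a b σ : ℂ) (ha : a ≠ 0) (hσ : σ ≠ 0)
    (m k : ℕ) :
    (1 - b * σ * (q : ℂ) ^ m) * (1 - b / σ * (q : ℂ) ^ m) *
        (qP q (a * σ) k * qP q (a / σ) k) =
      (1 - b / a * (q : ℂ) ^ m / (q : ℂ) ^ k) * (1 - a * b * (q : ℂ) ^ m * (q : ℂ) ^ k) *
          (qP q (a * σ) k * qP q (a / σ) k) +
        b / a * (q : ℂ) ^ m * (q : ℂ) / (q : ℂ) ^ (k + 1) *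
          (qP q (a * σ) (k + 1) * qP q (a / σ) (k + 1)) := by
  rw [qP_succ q (a * σ) k, qP_succ q (a / σ) k, pow_succ]
  have hv : (q : ℂ) ^ k ≠ 0 := pow_ne_zero _ hq
  generalize hV : ((q : ℂ) ^ k) = v at hv ⊢
  generalize hU : ((q : ℂ) ^ m) = u
  field_simp
  ring


set_option maxHeartbeats 2000000 in
lemma rec_mid (qc a b u v E F G H N D : ℂ) (ha : a ≠ 0) (hb : b ≠ 0) (hq : qc ≠ 0)
    (hu : u ≠ 0) (hv : v ≠ 0) (hG : G ≠ 0) (hH : H ≠ 0) (hD : D ≠ 0)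
    (hGf : 1 - qc * v ≠ 0) (hHf : 1 - a * b * v ≠ 0)
    (hC1 : 1 - (u * qc)⁻¹ * qc * a / b ≠ 0) (hDf : 1 - u⁻¹ * qc * a / b * v ≠ 0) :
    E * (1 - a * b * u) * (F * (1 - b / a * u)) *
        ((1 - (u * qc)⁻¹) * N * (v * qc) /
          (G * (1 - qc * v) * (H * (1 - a * b * v)) * ((1 - (u * qc)⁻¹ * qc * a / b) * D))) =
      E * F *
            (N * (1 - u⁻¹ * v) * (v * qc) /
              (G * (1 - qc * v) * (H * (1 - a * b * v)) * (D * (1 - u⁻¹ * qc * a / b * v)))) *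
          ((1 - b / a * u / (v * qc)) * (1 - a * b * u * (v * qc))) +
        E * F * (N * v / (G * H * D)) * (b / a * u * qc / (v * qc)) := by
  have h1 : 1 - (u * qc)⁻¹ * qc * a / b = (u * qc * b - qc * a) / (u * qc * b) := by
    field_simp
  have h2 : 1 - u⁻¹ * qc * a / b * v = (u * b - qc * a * v) / (u * b) := by
    field_simp
  have h1' : u * qc * b - qc * a ≠ 0 := by
    intro h0; rw [h1, h0, zero_div] at hC1; exact hC1 rfl
  have h2' : u * b - qc * a * v ≠ 0 := by
    intro h0; rw [h2, h0, zero_div] at hDf; exact hDf rfl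
  field_simp
  have hden1 : a * (u * qc * (G * (1 - qc * v) * (H * (1 - a * b * v)) * ((u * qc * b - qc * a) * D))) ≠ 0 := by
    simp [mul_ne_zero_iff, ha, hb, hq, hu, hv, hG, hH, hD, hGf, hHf, h1', h2']
  have hden2 : u * (G * (1 - qc * v) * (H * (1 - a * b * v)) * (D * (u * b - qc * a * v))) * (a * (v * qc)) ≠ 0 := by
    simp [mul_ne_zero_iff, ha, hb, hq, hu, hv, hG, hH, hD, hGf, hHf, h1', h2']
  have h3 : b * u - a ≠ 0 := fun h0 => h1' (by linear_combination qc * h0)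
  have h4 : b * u - a * qc * v ≠ 0 := fun h0 => h2' (by linear_combination h0)
  rw [div_add' _ _ _ h4, mul_div_assoc', div_eq_div_iff h3 h4]
  ring


set_option maxHeartbeats 2000000 in
lemma rec_top (qc a b v F G H N D : ℂ) (ha : a ≠ 0) (hb : b ≠ 0) (hq : qc ≠ 0)
    (hv : v ≠ 0) (hG : G ≠ 0) (hH : H ≠ 0) (hD : D ≠ 0)
    (hGf : 1 - qc * v ≠ 0) (hHf : 1 - a * b * v ≠ 0)
    (hC1 : 1 - (v * qc)⁻¹ * qc * a / b ≠ 0) :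
    H * (1 - a * b * v) * (F * (1 - b / a * v)) *
        ((1 - (v * qc)⁻¹) * N * (v * qc) /
          (G * (1 - qc * v) * (H * (1 - a * b * v)) * ((1 - (v * qc)⁻¹ * qc * a / b) * D))) =
      0 + H * F * (N * v / (G * H * D)) * (b / a * v * qc / (v * qc)) := by
  have h1 : 1 - (v * qc)⁻¹ * qc * a / b = (v * qc * b - qc * a) / (v * qc * b) := by
    field_simp
  have h1' : v * qc * b - qc * a ≠ 0 := by
    intro h0; rw [h1, h0, zero_div] at hC1; exact hC1 rfl
  rw [zero_add]
  field_simp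
  have h3 : b * v - a ≠ 0 := fun h0 => h1' (by linear_combination qc * h0)
  have h4 : 1 - v * qc ≠ 0 := by rwa [mul_comm]
  rw [div_eq_iff (mul_ne_zero h4 h3)]
  ring


set_option maxHeartbeats 1000000 in
/-- Recurrence in `m` for the connection coefficients. -/
lemma dco_rec (q : ℝ) (hq0 : 0 < q) (hq1 : q < 1) (a b : ℂ) (ha : a ≠ 0) (hb : b ≠ 0)
    (m k : ℕ) (hk : k ≤ m + 1)
    (h1 : ∀ j ≤ m + 1, qP q (a * b) j ≠ 0)
    (h2 : ∀ j ≤ m + 1, qP q (((q : ℂ) ^ (m + 1))⁻¹ * (q : ℂ) * a / b) j ≠ 0) :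
    dco q a b (m + 1) k =
      (if k ≤ m then
          dco q a b m k *
            ((1 - b / a * (q : ℂ) ^ m / (q : ℂ) ^ k) * (1 - a * b * (q : ℂ) ^ m * (q : ℂ) ^ k))
        else 0) +
      (if 1 ≤ k then
          dco q a b m (k - 1) * (b / a * (q : ℂ) ^ m * (q : ℂ) / (q : ℂ) ^ k)
        else 0) := by
  have hq : (q : ℂ) ≠ 0 := Complex.ofReal_ne_zero.mpr hq0.ne'
  have hu : (q : ℂ) ^ m ≠ 0 := pow_ne_zero _ hq
  have e2 : ((q : ℂ) ^ m)⁻¹ * (q : ℂ) * a / b = (((q : ℂ) ^ (m + 1))⁻¹ * (q : ℂ) * a / b) * q := by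
    rw [pow_succ]; field_simp
  have h2m : ∀ j ≤ m, qP q (((q : ℂ) ^ m)⁻¹ * (q : ℂ) * a / b) j ≠ 0 := by
    intro j hj
    have h := h2 (j + 1) (by omega)
    rw [qP_shift q e2 j] at h
    exact fun h0 => h (by rw [h0, mul_zero])
  rcases k with _ | j
  · -- k = 0
    simp only [dco, qP_zero, pow_zero, if_pos (Nat.zero_le m), if_neg (by omega : ¬ 1 ≤ 0)]
    rw [qP_succ q (a * b) m, qP_succ q (b / a) m]
    simp only [mul_one, div_one]
    ring
  · -- k = j + 1
    have hj1 : j + 1 ≤ m + 1 := hk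
    have e1 : ((q : ℂ) ^ m)⁻¹ = ((q : ℂ) ^ (m + 1))⁻¹ * q := by
      rw [pow_succ]; field_simp
    have hGj : qP q (q : ℂ) j ≠ 0 := qP_q_ne_zero hq0 hq1 j
    have hGf : 1 - (q : ℂ) * (q : ℂ) ^ j ≠ 0 :=
      qP_factor_ne q (qP_q_ne_zero hq0 hq1 (j + 1)) (Nat.lt_succ_self j)
    have hHj : qP q (a * b) j ≠ 0 := h1 j (by omega)
    have hHf : 1 - (a * b) * (q : ℂ) ^ j ≠ 0 :=
      qP_factor_ne q (h1 (j + 1) (by omega)) (Nat.lt_succ_self j)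
    have hDj : qP q (((q : ℂ) ^ m)⁻¹ * (q : ℂ) * a / b) j ≠ 0 := h2m j (by omega)
    have hC1 : 1 - (((q : ℂ) ^ (m + 1))⁻¹ * (q : ℂ) * a / b) ≠ 0 := by
      have := qP_factor_ne q (h2 1 (by omega)) (Nat.lt_succ_self 0)
      simpa using this
    have hv : (q : ℂ) ^ j ≠ 0 := pow_ne_zero _ hq
    simp only [dco, Nat.add_sub_cancel]
    rw [qP_shift q e1 j, qP_shift q e2 j, qP_succ q (a * b) m, qP_succ q (b / a) m,
      qP_succ q (q : ℂ) j, qP_succ q (a * b) j, qP_succ q (((q : ℂ) ^ m)⁻¹) j,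
      qP_succ q (((q : ℂ) ^ m)⁻¹ * (q : ℂ) * a / b) j]
    by_cases hjm : j + 1 ≤ m
    · have hDf : 1 - (((q : ℂ) ^ m)⁻¹ * (q : ℂ) * a / b) * (q : ℂ) ^ j ≠ 0 :=
        qP_factor_ne q (h2m (j + 1) hjm) (Nat.lt_succ_self j)
      rw [if_pos hjm, if_pos (by omega : 1 ≤ j + 1)]
      simp only [pow_succ]
      generalize hV : ((q : ℂ) ^ j) = v at hv hGf hHf hDf ⊢
      simp only [pow_succ] at hC1
      generalize hU : ((q : ℂ) ^ m) = u at hu hC1 hDf hDj h2m ⊢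
      exact rec_mid (q : ℂ) a b u v _ _ _ _ _ _ ha hb hq hu hv hGj hHj hDj hGf hHf hC1 hDf
    · have hjm' : j = m := by omega
      subst hjm'
      rw [if_neg hjm, if_pos (by omega : 1 ≤ j + 1)]
      simp only [pow_succ]
      simp only [pow_succ] at hC1
      generalize hV : ((q : ℂ) ^ j) = v at hv hGf hHf hDj hC1 h2m ⊢
      exact rec_top (q : ℂ) a b v _ _ _ _ _ ha hb hq hv hGj hHj hDj hGf hHf hC1

lemma key (q : ℝ) (hq0 : 0 < q) (hq1 : q < 1) (a b σ : ℂ) (ha : a ≠ 0) (hb : b ≠ 0)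
    (hσ : σ ≠ 0) (m : ℕ) (h1 : ∀ k ≤ m, qP q (a * b) k ≠ 0)
    (h2 : ∀ k ≤ m, qP q (((q : ℂ) ^ m)⁻¹ * (q : ℂ) * a / b) k ≠ 0) :
    qP q (b * σ) m * qP q (b / σ) m =
      ∑ k ∈ Finset.range (m + 1), dco q a b m k * (qP q (a * σ) k * qP q (a / σ) k) := by
  induction m with
  | zero => simp [dco, qP_zero]
  | succ m ih =>
    have hq : (q : ℂ) ≠ 0 := Complex.ofReal_ne_zero.mpr hq0.ne'
    have h1m : ∀ k ≤ m, qP q (a * b) k ≠ 0 := fun k hk => h1 k (le_trans hk (Nat.le_succ m))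
    have e2 : ((q : ℂ) ^ m)⁻¹ * (q : ℂ) * a / b
        = (((q : ℂ) ^ (m + 1))⁻¹ * (q : ℂ) * a / b) * q := by
      rw [pow_succ]; field_simp
    have h2m : ∀ k ≤ m, qP q (((q : ℂ) ^ m)⁻¹ * (q : ℂ) * a / b) k ≠ 0 := by
      intro k hk
      have h := h2 (k + 1) (by omega)
      rw [qP_shift q e2 k] at h
      exact fun h0 => h (by rw [h0, mul_zero])
    have ihe := ih h1m h2m
    have lhs_eq : qP q (b * σ) (m + 1) * qP q (b / σ) (m + 1)
        = (1 - b * σ * (q : ℂ) ^ m) * (1 - b / σ * (q : ℂ) ^ m) *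
            (qP q (b * σ) m * qP q (b / σ) m) := by
      rw [qP_succ q (b * σ) m, qP_succ q (b / σ) m]; ring
    rw [lhs_eq, ihe, Finset.mul_sum]
    have step : ∀ k ∈ Finset.range (m + 1),
        (1 - b * σ * (q : ℂ) ^ m) * (1 - b / σ * (q : ℂ) ^ m) *
            (dco q a b m k * (qP q (a * σ) k * qP q (a / σ) k))
        = dco q a b m k * ((1 - b / a * (q : ℂ) ^ m / (q : ℂ) ^ k) *
              (1 - a * b * (q : ℂ) ^ m * (q : ℂ) ^ k) * (qP q (a * σ) k * qP q (a / σ) k))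
          + dco q a b m k * (b / a * (q : ℂ) ^ m * (q : ℂ) / (q : ℂ) ^ (k + 1) *
              (qP q (a * σ) (k + 1) * qP q (a / σ) (k + 1))) := by
      intro k _
      have hss := sigma_step q hq a b σ ha hσ m k
      calc (1 - b * σ * (q : ℂ) ^ m) * (1 - b / σ * (q : ℂ) ^ m) *
            (dco q a b m k * (qP q (a * σ) k * qP q (a / σ) k))
          = dco q a b m k * ((1 - b * σ * (q : ℂ) ^ m) * (1 - b / σ * (q : ℂ) ^ m) *
              (qP q (a * σ) k * qP q (a / σ) k)) := by ring
        _ = _ := by rw [hss]; ring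
    rw [Finset.sum_congr rfl step, Finset.sum_add_distrib]
    have hterm : ∀ k ∈ Finset.range (m + 1 + 1),
        dco q a b (m + 1) k * (qP q (a * σ) k * qP q (a / σ) k)
        = (if k ≤ m then dco q a b m k * ((1 - b / a * (q : ℂ) ^ m / (q : ℂ) ^ k) *
              (1 - a * b * (q : ℂ) ^ m * (q : ℂ) ^ k) * (qP q (a * σ) k * qP q (a / σ) k))
            else 0)
          + (if 1 ≤ k then dco q a b m (k - 1) * (b / a * (q : ℂ) ^ m * (q : ℂ) / (q : ℂ) ^ k *
              (qP q (a * σ) k * qP q (a / σ) k)) else 0) := by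
      intro k hk
      rw [dco_rec q hq0 hq1 a b ha hb m k (by have := Finset.mem_range.mp hk; omega) h1 h2]
      split_ifs <;> ring
    rw [Finset.sum_congr rfl hterm, Finset.sum_add_distrib]
    congr 1
    · conv_rhs => rw [Finset.sum_range_succ]
      rw [if_neg (by omega : ¬ m + 1 ≤ m), add_zero]
      exact (Finset.sum_congr rfl fun k hk =>
        if_pos (by have := Finset.mem_range.mp hk; omega)).symm
    · conv_rhs => rw [Finset.sum_range_succ']
      rw [if_neg (by omega : ¬ 1 ≤ 0), add_zero]
      refine (Finset.sum_congr rfl fun k hk => ?_).symm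
      rw [if_pos (by omega : 1 ≤ k + 1), Nat.add_sub_cancel]

/-- Connection coefficient formula (equivalent to the q-Saalschütz summation):
`(bσ;q)_m (b/σ;q)_m = (ab;q)_m (b/a;q)_m ∑_{k=0}^m
   (q^{-m};q)_k q^k / ((q;q)_k (ab;q)_k (q^{1-m}a/b;q)_k) · (aσ;q)_k (a/σ;q)_k`. -/
theorem connection_coefficient_qSaalschutz (q : ℝ) (hq0 : 0 < q) (hq1 : q < 1)
    (a b σ : ℂ) (ha : a ≠ 0) (hb : b ≠ 0) (hσ : σ ≠ 0) (m : ℕ)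
    (h1 : ∀ k ≤ m, qP q (a * b) k ≠ 0)
    (h2 : ∀ k ≤ m, qP q ((q : ℂ) ^ (1 - (m : ℤ)) * a / b) k ≠ 0) :
    qP q (b * σ) m * qP q (b / σ) m =
      qP q (a * b) m * qP q (b / a) m *
        ∑ k ∈ Finset.range (m + 1),
          (qP q ((q : ℂ) ^ (-(m : ℤ))) k * (q : ℂ) ^ k) /
              (qP q (q : ℂ) k * qP q (a * b) k *
                qP q ((q : ℂ) ^ (1 - (m : ℤ)) * a / b) k) *
            (qP q (a * σ) k * qP q (a / σ) k) := by
  have hq : (q : ℂ) ≠ 0 := Complex.ofReal_ne_zero.mpr hq0.ne'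
  have e0 : (q : ℂ) ^ (-(m : ℤ)) = ((q : ℂ) ^ m)⁻¹ := by
    rw [zpow_neg, zpow_natCast]
  have e1 : (q : ℂ) ^ (1 - (m : ℤ)) = ((q : ℂ) ^ m)⁻¹ * (q : ℂ) := by
    rw [sub_eq_add_neg, zpow_add₀ hq, zpow_one, zpow_neg, zpow_natCast]; ring
  simp only [e0, e1] at h2 ⊢
  rw [key q hq0 hq1 a b σ ha hb hσ m h1 h2, Finset.mul_sum]
  refine Finset.sum_congr rfl fun k _ => ?_
  simp only [dco]
  ring
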